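/- Under the top agent property and limited complementarity, the graph G produced by the ordered match algorithm has the property that every agent weakly prefers G to any graph G' obtained from G by deleting a subset of its edges. -/

import Mathlib

open Finset

/-- Closed neighborhood of `k` in the undirected graph with edge set `E`. -/
def nbhd {N : ℕ} (E : Finset (Fin N × Fin N)) (k : Fin N) : Finset (Fin N) :=
  insert k (Finset.univ.filter (fun m => (k, m) ∈ E ∨ (m, k) ∈ E))

/-- Strict preference of agent `k` derived from the weak preference `W` over coalitions. -/
def SPref {N : ℕ} (W : Fin N → Finset (Fin N) → Finset (Fin N) → Prop)
    (k : Fin N) (S T : Finset (Fin N)) : Prop :=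
  W k S T ∧ ¬ W k T S

/-- Each agent's weak preference over coalitions containing it is complete and transitive. -/
def TotalPreorderOn {N : ℕ}
    (W : Fin N → Finset (Fin N) → Finset (Fin N) → Prop) : Prop :=
  ∀ k : Fin N,
    (∀ S T : Finset (Fin N), k ∈ S → k ∈ T → W k S T ∨ W k T S) ∧
    (∀ S T R : Finset (Fin N), W k S T → W k T R → W k S R)

/-- Top agent property with agents labeled in decreasing order of the common preference:
every agent strictly prefers the lower-labeled of two other agents. -/
def TopAgentLabeled {N : ℕ}
    (W : Fin N → Finset (Fin N) → Finset (Fin N) → Prop) : Prop :=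
  ∀ k i j : Fin N, i ≠ k → j ≠ k → i < j →
    ∀ S : Finset (Fin N), k ∈ S → i ∉ S → j ∉ S →
      SPref W k (insert i S) (insert j S)

/-- Limited complementarity: if adding agent `i` strictly hurts `k`, then adding any nonempty
subset of agents labeled (i.e. ranked) weakly below `i` strictly hurts `k`. -/
def LimitedComp {N : ℕ}
    (W : Fin N → Finset (Fin N) → Finset (Fin N) → Prop) : Prop :=
  ∀ (k : Fin N) (S : Finset (Fin N)) (i : Fin N), k ∈ S →
    SPref W k S (insert i S) →
    ∀ S' : Finset (Fin N), S' ⊆ Finset.univ.filter (fun j => i ≤ j) → S'.Nonempty →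
      SPref W k S (S ∪ S')

open scoped Classical in
/-- One proposal step of the ordered match algorithm on edge set `E` for the pair `p = (n, l)`:
the edge is added iff both agents weakly prefer adding the other given current neighborhoods. -/
noncomputable def omStep {N : ℕ}
    (W : Fin N → Finset (Fin N) → Finset (Fin N) → Prop)
    (E : Finset (Fin N × Fin N)) (p : Fin N × Fin N) : Finset (Fin N × Fin N) :=
  if W p.1 (insert p.2 (nbhd E p.1)) (nbhd E p.1) ∧
     W p.2 (insert p.1 (nbhd E p.2)) (nbhd E p.2)
  then insert p E else E

/-- The list of proposal pairs `(n, l)` with `n < l`, in the order visited by ordered match. -/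
def pairList (N : ℕ) : List (Fin N × Fin N) :=
  (List.finRange N).flatMap (fun n =>
    ((List.finRange N).filter (fun l => n < l)).map (fun l => (n, l)))

/-- The ordered match algorithm: fold the proposal steps over all pairs in order. -/
noncomputable def orderedMatch {N : ℕ}
    (W : Fin N → Finset (Fin N) → Finset (Fin N) → Prop) : Finset (Fin N × Fin N) :=
  (pairList N).foldl (omStep W) ∅

/-- A coalition `C` with deviating graph `E'` blocks the graph `E`: new edges are only within
the coalition, edges between non-members are untouched, all members are weakly better off and
some member is strictly better off. -/
def Blocks {N : ℕ} (W : Fin N → Finset (Fin N) → Finset (Fin N) → Prop)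
    (E : Finset (Fin N × Fin N)) (C : Finset (Fin N))
    (E' : Finset (Fin N × Fin N)) : Prop :=
  (∀ e ∈ E', e ∉ E → e.1 ∈ C ∧ e.2 ∈ C) ∧
  (∀ e : Fin N × Fin N, e.1 ∉ C → e.2 ∉ C → (e ∈ E ↔ e ∈ E')) ∧
  (∀ m ∈ C, W m (nbhd E' m) (nbhd E m)) ∧
  (∃ m ∈ C, SPref W m (nbhd E' m) (nbhd E m))

/-- Strong stability: no nonempty coalition has a blocking deviation. -/
def StronglyStable {N : ℕ} (W : Fin N → Finset (Fin N) → Finset (Fin N) → Prop)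
    (E : Finset (Fin N × Fin N)) : Prop :=
  ¬ ∃ (C : Finset (Fin N)) (E' : Finset (Fin N × Fin N)), C.Nonempty ∧ Blocks W E C E'

namespace OMAux

variable {N : ℕ}

/-- Lexicographic order on pairs: the order in which `pairList` visits pairs. -/
def plt (p q : Fin N × Fin N) : Prop := p.1 < q.1 ∨ (p.1 = q.1 ∧ p.2 < q.2)

instance : DecidableRel (plt (N := N)) := fun _ _ => by unfold plt; infer_instance

lemma plt_irrefl (p : Fin N × Fin N) : ¬ plt p p := by
  simp [plt]

lemma plt_asymm {p q : Fin N × Fin N} (h : plt p q) : ¬ plt q p := by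
  simp only [plt, Fin.lt_def, Fin.ext_iff] at *
  omega

lemma sorted_decomp :
    ∀ (L : List (Fin N × Fin N)), L.Pairwise plt → ∀ e ∈ L,
      L = L.filter (fun x => decide (plt x e)) ++ e :: L.filter (fun x => decide (plt e x)) := by
  intro L
  induction L with
  | nil => simp
  | cons x L ih =>
    intro hp e he
    rcases List.pairwise_cons.mp hp with ⟨hx, hL⟩
    rcases List.mem_cons.mp he with rfl | he
    · have h1 : (e :: L).filter (fun y => decide (plt y e)) = [] := by
        rw [List.filter_eq_nil_iff]
        rintro y hy
        rcases List.mem_cons.mp hy with rfl | hy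
        · simpa using plt_irrefl y
        · simpa using plt_asymm (hx y hy)
      have h2 : (e :: L).filter (fun y => decide (plt e y)) = L := by
        rw [List.filter_cons_of_neg (by simpa using plt_irrefl e)]
        rw [List.filter_eq_self]
        intro y hy; simpa using hx y hy
      rw [h1, h2]; simp
    · have hxe : plt x e := hx e he
      have h1 : (x :: L).filter (fun y => decide (plt y e))
          = x :: L.filter (fun y => decide (plt y e)) :=
        List.filter_cons_of_pos (by simpa using hxe)
      have h2 : (x :: L).filter (fun y => decide (plt e y))
          = L.filter (fun y => decide (plt e y)) :=
        List.filter_cons_of_neg (by simpa using plt_asymm hxe)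
      rw [h1, h2, List.cons_append]
      exact congrArg _ (ih hL e he)

lemma pairwise_pairList : (pairList N).Pairwise plt := by
  unfold pairList
  rw [List.pairwise_flatMap]
  constructor
  · intro n _
    rw [List.pairwise_map]
    exact ((List.pairwise_lt_finRange N).filter _).imp (fun h => Or.inr ⟨rfl, h⟩)
  · refine (List.pairwise_lt_finRange N).imp ?_
    intro a b hab x hx y hy
    simp only [List.mem_map, List.mem_filter] at hx hy
    obtain ⟨l, _, rfl⟩ := hx
    obtain ⟨l', _, rfl⟩ := hy
    exact Or.inl hab

lemma nodup_pairList : (pairList N).Nodup :=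
  pairwise_pairList.imp (fun h => by rintro rfl; exact plt_irrefl _ h)

lemma mem_pairList_lt {p : Fin N × Fin N} (h : p ∈ pairList N) : p.1 < p.2 := by
  unfold pairList at h
  rw [List.mem_flatMap] at h
  obtain ⟨n, -, hn⟩ := h
  rw [List.mem_map] at hn
  obtain ⟨l, hl, rfl⟩ := hn
  rw [List.mem_filter] at hl
  simpa using hl.2

variable (W : Fin N → Finset (Fin N) → Finset (Fin N) → Prop)

lemma omStep_subset (E : Finset (Fin N × Fin N)) (p : Fin N × Fin N) :
    E ⊆ omStep W E p := by
  unfold omStep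
  split
  · exact Finset.subset_insert _ _
  · exact Finset.Subset.refl _

lemma omStep_subset_insert (E : Finset (Fin N × Fin N)) (p : Fin N × Fin N) :
    omStep W E p ⊆ insert p E := by
  unfold omStep
  split
  · exact Finset.Subset.refl _
  · exact Finset.subset_insert _ _

lemma mem_foldl : ∀ (L : List (Fin N × Fin N)) (E : Finset (Fin N × Fin N)) (f : Fin N × Fin N),
    f ∈ L.foldl (omStep W) E → f ∈ E ∨ f ∈ L := by
  intro L
  induction L with
  | nil => intro E f h; exact Or.inl h
  | cons p L ih =>
    intro E f h
    rcases ih (omStep W E p) f h with h' | h'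
    · rcases Finset.mem_insert.mp (omStep_subset_insert W E p h') with rfl | h''
      · exact Or.inr List.mem_cons_self
      · exact Or.inl h''
    · exact Or.inr (List.mem_cons_of_mem _ h')

lemma lemA : ∀ (L2 L1 : List (Fin N × Fin N)), pairList N = L1 ++ L2 →
    ∀ f, f ∈ L1.foldl (omStep W) ∅ ↔ f ∈ orderedMatch W ∧ f ∈ L1 := by
  intro L2
  induction L2 with
  | nil =>
    intro L1 h f
    rw [List.append_nil] at h
    subst h
    unfold orderedMatch
    constructor
    · intro hf
      refine ⟨hf, ?_⟩
      rcases mem_foldl W _ _ _ hf with h0 | h1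
      · simp at h0
      · exact h1
    · exact fun h => h.1
  | cons p L2' ih =>
    intro L1 h f
    have h' : pairList N = (L1 ++ [p]) ++ L2' := by
      rw [h, List.append_assoc, List.singleton_append]
    have ihs := ih (L1 ++ [p]) h' f
    rw [List.foldl_append] at ihs
    have hpL1 : p ∉ L1 := by
      have hnd := nodup_pairList (N := N)
      rw [h, List.nodup_append] at hnd
      exact fun hc => hnd.2.2 p hc p List.mem_cons_self rfl
    constructor
    · intro hf
      have h1 : f ∈ orderedMatch W := (ihs.mp (omStep_subset W _ p hf)).1
      refine ⟨h1, ?_⟩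
      rcases mem_foldl W _ _ _ hf with h0 | h0
      · simp at h0
      · exact h0
    · rintro ⟨hG, hfL1⟩
      have hne : f ≠ p := fun hfp => hpL1 (hfp ▸ hfL1)
      have h2 : f ∈ omStep W (L1.foldl (omStep W) ∅) p :=
        ihs.mpr ⟨hG, by simp [hfL1]⟩
      rcases Finset.mem_insert.mp (omStep_subset_insert W _ p h2) with h3 | h3
      · exact absurd h3 hne
      · exact h3

/-- The edge set built by the algorithm just before pair `f` is examined. -/
noncomputable def Efold (f : Fin N × Fin N) : Finset (Fin N × Fin N) :=
  ((pairList N).filter (fun x => decide (plt x f))).foldl (omStep W) ∅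

lemma mem_G_pairList {q : Fin N × Fin N} (hq : q ∈ orderedMatch W) : q ∈ pairList N := by
  rcases mem_foldl W _ _ _ hq with h0 | h1
  · simp at h0
  · exact h1

lemma mem_G_lt {q : Fin N × Fin N} (hq : q ∈ orderedMatch W) : q.1 < q.2 :=
  mem_pairList_lt (mem_G_pairList W hq)

lemma mem_Efold {f : Fin N × Fin N} (hf : f ∈ orderedMatch W) (q : Fin N × Fin N) :
    q ∈ Efold W f ↔ q ∈ orderedMatch W ∧ plt q f := by
  have hdec := sorted_decomp (pairList N) pairwise_pairList f (mem_G_pairList W hf)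
  have := lemA W (f :: (pairList N).filter (fun x => decide (plt f x)))
    ((pairList N).filter (fun x => decide (plt x f))) hdec q
  unfold Efold
  rw [this]
  constructor
  · rintro ⟨h1, h2⟩
    rw [List.mem_filter] at h2
    exact ⟨h1, by simpa using h2.2⟩
  · rintro ⟨h1, h2⟩
    exact ⟨h1, List.mem_filter.mpr ⟨mem_G_pairList W h1, by simpa using h2⟩⟩

lemma cond_of_mem {f : Fin N × Fin N} (hf : f ∈ orderedMatch W) :
    W f.1 (insert f.2 (nbhd (Efold W f) f.1)) (nbhd (Efold W f) f.1) ∧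
    W f.2 (insert f.1 (nbhd (Efold W f) f.2)) (nbhd (Efold W f) f.2) := by
  have hdec := sorted_decomp (pairList N) pairwise_pairList f (mem_G_pairList W hf)
  have hdec' : pairList N =
      ((pairList N).filter (fun x => decide (plt x f)) ++ [f]) ++
        (pairList N).filter (fun x => decide (plt f x)) := by
    conv_lhs => rw [hdec]
    rw [List.append_assoc, List.singleton_append]
  have hfE : f ∉ Efold W f := fun h => plt_irrefl f ((mem_Efold W hf f).mp h).2
  have hmem : f ∈ omStep W (Efold W f) f := by
    have := lemA W _ _ hdec' f
    rw [List.foldl_append] at this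
    exact this.mpr ⟨hf, by simp⟩
  by_contra hc
  unfold omStep at hmem
  rw [if_neg hc] at hmem
  exact hfE hmem

end OMAux
namespace OMAux
variable {N : ℕ} (W : Fin N → Finset (Fin N) → Finset (Fin N) → Prop)

lemma nbhd_Efold {m a : Fin N} {f : Fin N × Fin N} (hf : f ∈ orderedMatch W)
    (hfm : f = (m, a) ∨ f = (a, m)) :
    nbhd (Efold W f) m = insert m ((nbhd (orderedMatch W) m).filter (fun c => c < a)) := by
  have hfp := mem_G_lt W hf
  ext x
  simp only [nbhd, Finset.mem_insert, Finset.mem_filter, Finset.mem_univ, true_and,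
    mem_Efold W hf]
  constructor
  · rintro (rfl | (⟨h1, h2⟩ | ⟨h1, h2⟩))
    · exact Or.inl rfl
    · have hmx := mem_G_lt W h1
      rcases hfm with rfl | rfl
      · have hxa : x < a := by
          simp only [plt, Fin.lt_def, Fin.ext_iff] at h2 ⊢
          omega
        exact Or.inr ⟨Or.inr (Or.inl h1), hxa⟩
      · exfalso
        simp only [plt, Fin.lt_def, Fin.ext_iff] at h2 hfp hmx
        omega
    · have hxm := mem_G_lt W h1
      rcases hfm with rfl | rfl
      · have hxa : x < a := by
          simp only [Fin.lt_def] at hxm hfp ⊢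
          omega
        exact Or.inr ⟨Or.inr (Or.inr h1), hxa⟩
      · have hxa : x < a := by
          simp only [plt, Fin.lt_def, Fin.ext_iff] at h2 ⊢
          omega
        exact Or.inr ⟨Or.inr (Or.inr h1), hxa⟩
  · rintro (rfl | ⟨(rfl | hx | hx), hxa⟩)
    · exact Or.inl rfl
    · exact Or.inl rfl
    · have hmx := mem_G_lt W hx
      rcases hfm with rfl | rfl
      · exact Or.inr (Or.inl ⟨hx, Or.inr ⟨rfl, hxa⟩⟩)
      · exfalso
        simp only [Fin.lt_def] at hmx hfp hxa
        omega
    · have hxm := mem_G_lt W hx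
      rcases hfm with rfl | rfl
      · exact Or.inr (Or.inr ⟨hx, Or.inl hxm⟩)
      · exact Or.inr (Or.inr ⟨hx, Or.inl hxa⟩)

lemma step_pref (m a : Fin N) (ha : a ∈ nbhd (orderedMatch W) m) (hne : a ≠ m) :
    W m (insert a (insert m ((nbhd (orderedMatch W) m).filter (fun c => c < a))))
      (insert m ((nbhd (orderedMatch W) m).filter (fun c => c < a))) := by
  have haG : (m, a) ∈ orderedMatch W ∨ (a, m) ∈ orderedMatch W := by
    rcases Finset.mem_insert.mp ha with h | h
    · exact absurd h hne
    · exact (Finset.mem_filter.mp h).2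
  rcases haG with h | h
  · have hc : W m (insert a (nbhd (Efold W (m, a)) m)) (nbhd (Efold W (m, a)) m) :=
      (cond_of_mem W h).1
    rwa [nbhd_Efold W h (Or.inl rfl)] at hc
  · have hc : W m (insert a (nbhd (Efold W (a, m)) m)) (nbhd (Efold W (a, m)) m) :=
      (cond_of_mem W h).2
    rwa [nbhd_Efold W h (Or.inr rfl)] at hc

lemma pref_lemma (hW : TotalPreorderOn W) (hTop : TopAgentLabeled W)
    (m : Fin N) (S : Finset (Fin N)) (hmS : m ∈ S)
    (H : ∀ a ∈ S, a ≠ m →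
      W m (insert a (insert m (S.filter (fun c => c < a))))
        (insert m (S.filter (fun c => c < a)))) :
    ∀ T ⊆ S, m ∈ T → W m S T := by
  have hrefl : ∀ U : Finset (Fin N), m ∈ U → W m U U :=
    fun U hU => ((hW m).1 U U hU hU).elim id id
  intro T hTS hmT
  generalize hn : (∑ c ∈ S \ T, (N - c.val)) = n
  induction n using Nat.strong_induction_on generalizing T with
  | _ n ih =>
  by_cases hTSeq : T = S
  · subst hTSeq; exact hrefl T hmT
  · have hne : (S \ T).Nonempty := by
      rw [Finset.sdiff_nonempty]
      exact fun h => hTSeq (Finset.Subset.antisymm hTS h)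
    set d := (S \ T).min' hne with hd
    have hdmem : d ∈ S \ T := Finset.min'_mem _ hne
    have hdS : d ∈ S := (Finset.mem_sdiff.mp hdmem).1
    have hdT : d ∉ T := (Finset.mem_sdiff.mp hdmem).2
    have hdm : d ≠ m := fun h => hdT (h ▸ hmT)
    by_cases hR : ∃ r ∈ T, d < r ∧ r ≠ m
    · obtain ⟨r, hrT, hdr, hrm⟩ := hR
      have hmer : m ∈ T.erase r := Finset.mem_erase.mpr ⟨Ne.symm hrm, hmT⟩
      have hdner : d ∉ T.erase r := fun h => hdT (Finset.mem_of_mem_erase h)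
      have hrner : r ∉ T.erase r := Finset.notMem_erase r T
      have hsp := hTop m d r hdm hrm hdr (T.erase r) hmer hdner hrner
      rw [Finset.insert_erase hrT] at hsp
      have hsub : insert d (T.erase r) ⊆ S :=
        Finset.insert_subset hdS ((Finset.erase_subset _ _).trans hTS)
      have hmem' : m ∈ insert d (T.erase r) := Finset.mem_insert_of_mem hmer
      have hset : S \ insert d (T.erase r) = insert r ((S \ T).erase d) := by
        ext x
        simp only [Finset.mem_sdiff, Finset.mem_insert, Finset.mem_erase, not_or]
        constructor
        · rintro ⟨hxS, hxd, hxe⟩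
          by_cases hxr : x = r
          · exact Or.inl hxr
          · exact Or.inr ⟨hxd, hxS, fun hxT => hxe ⟨hxr, hxT⟩⟩
        · rintro (rfl | ⟨hxd, hxS, hxT⟩)
          · exact ⟨hTS hrT, ne_of_gt hdr, fun hc => hrner (Finset.mem_erase.mpr hc)⟩
          · exact ⟨hxS, hxd, fun hc => hxT hc.2⟩
      have hmeas : (∑ c ∈ S \ insert d (T.erase r), (N - c.val)) < n := by
        rw [hset]
        have hrnot : r ∉ (S \ T).erase d :=
          fun h => (Finset.mem_sdiff.mp (Finset.mem_of_mem_erase h)).2 hrT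
        rw [Finset.sum_insert hrnot]
        have hsum : (∑ x ∈ (S \ T).erase d, (N - x.val)) + (N - d.val)
            = ∑ c ∈ S \ T, (N - c.val) := Finset.sum_erase_add (S \ T) (fun c => N - c.val) hdmem
        have hdr' : d.val < r.val := hdr
        have hdN : d.val < N := d.isLt
        omega
      have h2 := ih _ hmeas (insert d (T.erase r)) hsub hmem' rfl
      exact (hW m).2 S _ T h2 hsp.1
    · push_neg at hR
      have hT : T = insert m (S.filter (fun c => c < d)) := by
        ext x
        simp only [Finset.mem_insert, Finset.mem_filter]
        constructor
        · intro hxT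
          by_cases hxm : x = m
          · exact Or.inl hxm
          · refine Or.inr ⟨hTS hxT, ?_⟩
            rcases lt_trichotomy x d with h | h | h
            · exact h
            · exact absurd (h ▸ hxT) hdT
            · exact absurd (hR x hxT h) hxm
        · rintro (rfl | ⟨hxS, hxd⟩)
          · exact hmT
          · by_contra hxT
            exact absurd hxd
              (not_lt.mpr (Finset.min'_le _ x (Finset.mem_sdiff.mpr ⟨hxS, hxT⟩)))
      have h1 : W m (insert d T) T := by
        rw [hT]; exact H d hdS hdm
      have hsub : insert d T ⊆ S := Finset.insert_subset hdS hTS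
      have hmem' : m ∈ insert d T := Finset.mem_insert_of_mem hmT
      have hset : S \ insert d T = (S \ T).erase d := by
        ext x
        simp only [Finset.mem_sdiff, Finset.mem_insert, Finset.mem_erase, not_or]
        tauto
      have hmeas : (∑ c ∈ S \ insert d T, (N - c.val)) < n := by
        rw [hset]
        have hsum : (∑ x ∈ (S \ T).erase d, (N - x.val)) + (N - d.val)
            = ∑ c ∈ S \ T, (N - c.val) := Finset.sum_erase_add (S \ T) (fun c => N - c.val) hdmem
        have hdN : d.val < N := d.isLt
        omega
      have h2 := ih _ hmeas (insert d T) hsub hmem' rfl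
      exact (hW m).2 S _ T h2 h1

end OMAux
/-- under the top agent property and limited complementarity, every agent weakly
prefers the ordered match outcome to any graph obtained by deleting some of its edges. -/
theorem stmt1 {N : ℕ} (W : Fin N → Finset (Fin N) → Finset (Fin N) → Prop)
    (hW : TotalPreorderOn W) (hTop : TopAgentLabeled W) (hLC : LimitedComp W) :
    ∀ E' ⊆ orderedMatch W, ∀ m : Fin N, W m (nbhd (orderedMatch W) m) (nbhd E' m) := by
  intro E' hE' m
  have hsub : nbhd E' m ⊆ nbhd (orderedMatch W) m := by
    intro x hx
    simp only [nbhd, Finset.mem_insert, Finset.mem_filter, Finset.mem_univ, true_and] at hx ⊢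
    exact hx.imp id (fun h => h.imp (fun h' => hE' h') (fun h' => hE' h'))
  exact OMAux.pref_lemma W hW hTop m (nbhd (orderedMatch W) m)
    (Finset.mem_insert_self _ _)
    (fun a ha hne => OMAux.step_pref W m a ha hne)
    (nbhd E' m) hsub (Finset.mem_insert_self _ _)
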